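/- Let G = (V,E) be a finite bi-directed graph. A binary distribution p on V belongs to the model B(G) (i.e., satisfies the connected set Markov property for G) if and only if its Möbius parameters q_A(p) satisfy: for every disconnected set D ⊆ V, with unique partition D = C_1 ∪̇ ⋯ ∪̇ C_r into inclusion-maximal connected subsets, q_D(p) = q_{C_1}(p)·q_{C_2}(p)⋯q_{C_r}(p). -/

import Mathlib

open Finset

namespace BMMI

variable {V : Type*} [Fintype V] [DecidableEq V]

/-- `Pr p A a` is the probability of the event `X_A = a|_A` under `p`. -/
def Pr (p : (V → Bool) → ℝ) (A : Finset V) (a : V → Bool) : ℝ :=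
  ∑ i ∈ Finset.univ.filter (fun i : V → Bool => ∀ v ∈ A, i v = a v), p i

/-- `p` is a binary distribution on `V`. -/
def IsDist (p : (V → Bool) → ℝ) : Prop :=
  (∀ i, 0 ≤ p i) ∧ ∑ i : V → Bool, p i = 1

/-- `Pr2 p S T a b` is the probability of the joint event `X_S = a|_S, X_T = b|_T`. -/
def Pr2 (p : (V → Bool) → ℝ) (S T : Finset V) (a b : V → Bool) : ℝ :=
  ∑ i ∈ Finset.univ.filter
      (fun i : V → Bool => (∀ v ∈ S, i v = a v) ∧ (∀ v ∈ T, i v = b v)), p i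

/-- `X_S` and `X_T` are independent under `p`. -/
def Indep (p : (V → Bool) → ℝ) (S T : Finset V) : Prop :=
  ∀ a b : V → Bool, Pr2 p S T a b = Pr p S a * Pr p T b

/-- `spo G A` consists of `A` together with all vertices adjacent to a vertex of `A`. -/
def spo (G : SimpleGraph V) [DecidableRel G.Adj] (A : Finset V) : Finset V :=
  Finset.univ.filter (fun w => w ∈ A ∨ ∃ v ∈ A, G.Adj v w)

/-- `C` is connected in `G`: every pair of vertices of `C` is joined by a walk
all of whose vertices lie in `C`. -/
def Conn (G : SimpleGraph V) (C : Finset V) : Prop :=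
  ∀ v ∈ C, ∀ w ∈ C, ∃ W : G.Walk v w, ∀ x ∈ W.support, x ∈ C

/-- The connected set Markov property for the bi-directed graph `G`. -/
def CSMP (G : SimpleGraph V) [DecidableRel G.Adj] (p : (V → Bool) → ℝ) : Prop :=
  ∀ C : Finset V, C.Nonempty → Conn G C → Indep p C (Finset.univ \ spo G C)

/-- `C` is an inclusion-maximal connected subset of `D` (a connected component of the
induced subgraph on `D`). -/
def IsMaxConnComp (G : SimpleGraph V) (D C : Finset V) : Prop :=
  C ⊆ D ∧ C.Nonempty ∧ Conn G C ∧
    ∀ C' : Finset V, C ⊆ C' → C' ⊆ D → Conn G C' → C' = C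

/-- The Möbius parameter `q_A(p) = P(X_A = 0)`. -/
def qM (p : (V → Bool) → ℝ) (A : Finset V) : ℝ := Pr p A (fun _ => false)

variable {p : (V → Bool) → ℝ}

lemma sum_filter_congr' (p : (V → Bool) → ℝ) {P Q : (V → Bool) → Prop}
    [DecidablePred P] [DecidablePred Q] (h : ∀ i, P i ↔ Q i) :
    ∑ i ∈ Finset.univ.filter P, p i = ∑ i ∈ Finset.univ.filter Q, p i := by
  rw [Finset.filter_congr (fun i _ => h i)]

lemma sum_split (p : (V → Bool) → ℝ) (P : (V → Bool) → Prop) [DecidablePred P] (v : V) :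
    ∑ i ∈ Finset.univ.filter P, p i =
      (∑ i ∈ Finset.univ.filter (fun i => P i ∧ i v = true), p i) +
      ∑ i ∈ Finset.univ.filter (fun i => P i ∧ i v = false), p i := by
  have h := Finset.sum_filter_add_sum_filter_not (Finset.univ.filter P)
    (fun i : V → Bool => i v = true) p
  rw [Finset.filter_filter, Finset.filter_filter] at h
  rw [← h]
  congr 1
  apply sum_filter_congr'
  intro i
  simp

lemma pred_update {A : Finset V} {v : V} (hv : v ∈ A) (a : V → Bool) (c : Bool) (i : V → Bool) :
    ((∀ w ∈ A.erase v, i w = a w) ∧ i v = c) ↔ (∀ w ∈ A, i w = Function.update a v c w) := by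
  constructor
  · rintro ⟨h1, h2⟩ w hw
    by_cases hwv : w = v
    · subst hwv; simpa [Function.update_self] using h2
    · rw [Function.update_of_ne hwv]
      exact h1 w (Finset.mem_erase.mpr ⟨hwv, hw⟩)
  · intro h
    refine ⟨fun w hw => ?_, ?_⟩
    · have hwv := (Finset.mem_erase.mp hw).1
      have := h w (Finset.mem_erase.mp hw).2
      rwa [Function.update_of_ne hwv] at this
    · simpa [Function.update_self] using h v hv

lemma Pr_erase (p : (V → Bool) → ℝ) {A : Finset V} {v : V} (hv : v ∈ A) (a : V → Bool) :
    Pr p (A.erase v) a =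
      Pr p A (Function.update a v true) + Pr p A (Function.update a v false) := by
  unfold Pr
  rw [sum_split p _ v]
  congr 1 <;> exact sum_filter_congr' p (fun i => pred_update hv a _ i)

lemma Pr2_erase_left (p : (V → Bool) → ℝ) {S : Finset V} (T : Finset V) {v : V}
    (hv : v ∈ S) (a b : V → Bool) :
    Pr2 p (S.erase v) T a b =
      Pr2 p S T (Function.update a v true) b + Pr2 p S T (Function.update a v false) b := by
  unfold Pr2
  rw [sum_split p _ v]
  congr 1
  · apply sum_filter_congr'; intro i; rw [← pred_update hv a true i]; tauto
  · apply sum_filter_congr'; intro i; rw [← pred_update hv a false i]; tauto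

lemma Pr2_erase_right (p : (V → Bool) → ℝ) (S : Finset V) {T : Finset V} {v : V}
    (hv : v ∈ T) (a b : V → Bool) :
    Pr2 p S (T.erase v) a b =
      Pr2 p S T a (Function.update b v true) + Pr2 p S T a (Function.update b v false) := by
  unfold Pr2
  rw [sum_split p _ v]
  congr 1
  · apply sum_filter_congr'; intro i; rw [← pred_update hv b true i]; tauto
  · apply sum_filter_congr'; intro i; rw [← pred_update hv b false i]; tauto

lemma Pr2_zero (p : (V → Bool) → ℝ) (A B : Finset V) :
    Pr2 p A B (fun _ => false) (fun _ => false) = qM p (A ∪ B) := by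
  unfold Pr2 qM Pr
  apply sum_filter_congr'
  intro i
  simp [Finset.mem_union, or_imp, forall_and]

lemma q_empty (hp : IsDist p) : qM p (∅ : Finset V) = 1 := by
  unfold qM Pr
  rw [← hp.2]
  apply Finset.sum_congr _ (fun _ _ => rfl)
  simp

lemma indep_erase_right {S T : Finset V} (h : Indep p S T) (v : V) :
    Indep p S (T.erase v) := by
  by_cases hv : v ∈ T
  · intro a b
    rw [Pr2_erase_right p S hv a b, h a _, h a _, Pr_erase p hv b]
    ring
  · rwa [Finset.erase_eq_of_notMem hv]

lemma indep_subset_right {S T T' : Finset V} (h : Indep p S T) (hT' : T' ⊆ T) :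
    Indep p S T' := by
  have key : ∀ (n : ℕ) (T : Finset V), (T \ T').card = n → T' ⊆ T → Indep p S T →
      Indep p S T' := by
    intro n
    induction n with
    | zero =>
      intro T hcard hsub hind
      rw [Finset.card_eq_zero, Finset.sdiff_eq_empty_iff_subset] at hcard
      rwa [Finset.Subset.antisymm hcard hsub] at hind
    | succ n ih =>
      intro T hcard hsub hind
      have hne : (T \ T').Nonempty := by
        rw [← Finset.card_pos, hcard]; omega
      obtain ⟨v, hv⟩ := hne
      rw [Finset.mem_sdiff] at hv
      refine ih (T.erase v) ?_ ?_ (indep_erase_right hind v)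
      · rw [Finset.erase_sdiff_comm, Finset.card_erase_of_mem (Finset.mem_sdiff.mpr hv), hcard]
        omega
      · intro x hx
        exact Finset.mem_erase.mpr ⟨fun hxv => hv.2 (hxv ▸ hx), hsub hx⟩
  exact key _ T rfl hT' h


lemma Pr_zero (p : (V → Bool) → ℝ) {A : Finset V} {a : V → Bool}
    (ha : ∀ v ∈ A, a v = false) : Pr p A a = qM p A := by
  unfold qM Pr
  apply sum_filter_congr'
  intro i
  constructor
  · intro h v hv; rw [h v hv, ha v hv]
  · intro h v hv; rw [h v hv, ha v hv]

lemma filter_update_false {S : Finset V} {a : V → Bool} {v : V} :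
    (S.filter (fun w => Function.update a v false w = true)) =
      (S.filter (fun w => a w = true)).erase v := by
  ext w
  simp only [Finset.mem_filter, Finset.mem_erase]
  by_cases hwv : w = v
  · subst hwv; simp [Function.update_self]
  · simp only [Function.update_of_ne hwv, hwv]
    tauto

lemma indep_of_q {S T : Finset V}
    (H : ∀ A ⊆ S, ∀ B ⊆ T, qM p (A ∪ B) = qM p A * qM p B) : Indep p S T := by
  suffices aux : ∀ n : ℕ, ∀ S' ⊆ S, ∀ T' ⊆ T, ∀ a b : V → Bool,
      (S'.filter (fun w => a w = true)).card + (T'.filter (fun w => b w = true)).card = n →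
      Pr2 p S' T' a b = Pr p S' a * Pr p T' b by
    intro a b
    exact aux _ S Finset.Subset.rfl T Finset.Subset.rfl a b rfl
  intro n
  induction n using Nat.strong_induction_on with
  | _ n ih =>
    intro S' hS' T' hT' a b hn
    by_cases hSa : ∃ v ∈ S', a v = true
    · obtain ⟨v, hv, hav⟩ := hSa
      have hupd : Function.update a v true = a := by rw [← hav]; exact Function.update_eq_self v a
      have h1 := Pr2_erase_left p T' (v := v) hv a b
      rw [hupd] at h1
      have h2 := Pr_erase p (v := v) hv a
      rw [hupd] at h2
      have hvmem : v ∈ S'.filter (fun w => a w = true) := Finset.mem_filter.mpr ⟨hv, hav⟩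
      have hcard1 : ((S'.erase v).filter (fun w => a w = true)).card
          + (T'.filter (fun w => b w = true)).card < n := by
        rw [Finset.filter_erase, Finset.card_erase_of_mem hvmem]
        have : 0 < (S'.filter (fun w => a w = true)).card := Finset.card_pos.mpr ⟨v, hvmem⟩
        omega
      have hcard2 : (S'.filter (fun w => Function.update a v false w = true)).card
          + (T'.filter (fun w => b w = true)).card < n := by
        rw [filter_update_false, Finset.card_erase_of_mem hvmem]
        have : 0 < (S'.filter (fun w => a w = true)).card := Finset.card_pos.mpr ⟨v, hvmem⟩
        omega
      have ih1 := ih _ hcard1 (S'.erase v) ((Finset.erase_subset _ _).trans hS') T' hT' a b rfl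
      have ih2 := ih _ hcard2 S' hS' T' hT' (Function.update a v false) b rfl
      have key : Pr2 p S' T' a b = Pr p (S'.erase v) a * Pr p T' b
          - Pr p S' (Function.update a v false) * Pr p T' b := by
        rw [← ih1, ← ih2]; linarith
      rw [key, h2]; ring
    · by_cases hTb : ∃ v ∈ T', b v = true
      · obtain ⟨v, hv, hbv⟩ := hTb
        have hupd : Function.update b v true = b := by
          rw [← hbv]; exact Function.update_eq_self v b
        have h1 := Pr2_erase_right p S' (v := v) hv a b
        rw [hupd] at h1
        have h2 := Pr_erase p (v := v) hv b
        rw [hupd] at h2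
        have hvmem : v ∈ T'.filter (fun w => b w = true) := Finset.mem_filter.mpr ⟨hv, hbv⟩
        have hcard1 : (S'.filter (fun w => a w = true)).card
            + ((T'.erase v).filter (fun w => b w = true)).card < n := by
          rw [Finset.filter_erase, Finset.card_erase_of_mem hvmem]
          have : 0 < (T'.filter (fun w => b w = true)).card := Finset.card_pos.mpr ⟨v, hvmem⟩
          omega
        have hcard2 : (S'.filter (fun w => a w = true)).card
            + (T'.filter (fun w => Function.update b v false w = true)).card < n := by
          rw [filter_update_false, Finset.card_erase_of_mem hvmem]
          have : 0 < (T'.filter (fun w => b w = true)).card := Finset.card_pos.mpr ⟨v, hvmem⟩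
          omega
        have ih1 := ih _ hcard1 S' hS' (T'.erase v) ((Finset.erase_subset _ _).trans hT') a b rfl
        have ih2 := ih _ hcard2 S' hS' T' hT' a (Function.update b v false) rfl
        have key : Pr2 p S' T' a b = Pr p S' a * Pr p (T'.erase v) b
            - Pr p S' a * Pr p T' (Function.update b v false) := by
          rw [← ih1, ← ih2]; linarith
        rw [key, h2]; ring
      · push_neg at hSa hTb
        have ha : ∀ v ∈ S', a v = false := fun v hv => by
          have := hSa v hv; revert this; cases a v <;> simp
        have hb : ∀ v ∈ T', b v = false := fun v hv => by
          have := hTb v hv; revert this; cases b v <;> simp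
        have e1 : Pr2 p S' T' a b = qM p (S' ∪ T') := by
          unfold Pr2 qM Pr
          apply sum_filter_congr'
          intro i
          simp only [Finset.mem_union, or_imp, forall_and]
          constructor
          · rintro ⟨h1, h2⟩
            exact ⟨fun v hv => (h1 v hv).trans (ha v hv), fun v hv => (h2 v hv).trans (hb v hv)⟩
          · rintro ⟨h1, h2⟩
            exact ⟨fun v hv => (h1 v hv).trans (ha v hv).symm,
              fun v hv => (h2 v hv).trans (hb v hv).symm⟩
        rw [e1, H S' hS' T' hT', Pr_zero p ha, Pr_zero p hb]

/-- Reachability within a vertex subset. -/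
def RelIn (G : SimpleGraph V) (D : Finset V) (v w : V) : Prop :=
  ∃ W : G.Walk v w, ∀ x ∈ W.support, x ∈ D

variable {G : SimpleGraph V}

lemma relIn_left {D : Finset V} {v w : V} (h : RelIn G D v w) : v ∈ D :=
  h.choose_spec v h.choose.start_mem_support

lemma relIn_right {D : Finset V} {v w : V} (h : RelIn G D v w) : w ∈ D :=
  h.choose_spec w h.choose.end_mem_support

lemma relIn_refl {D : Finset V} {v : V} (hv : v ∈ D) : RelIn G D v v :=
  ⟨SimpleGraph.Walk.nil, by simp [hv]⟩

lemma relIn_symm {D : Finset V} {v w : V} (h : RelIn G D v w) : RelIn G D w v := by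
  obtain ⟨W, hW⟩ := h
  exact ⟨W.reverse, fun x hx => hW x (by simpa [SimpleGraph.Walk.support_reverse] using hx)⟩

lemma relIn_trans {D : Finset V} {u v w : V} (h1 : RelIn G D u v) (h2 : RelIn G D v w) :
    RelIn G D u w := by
  obtain ⟨W1, hW1⟩ := h1
  obtain ⟨W2, hW2⟩ := h2
  refine ⟨W1.append W2, fun x hx => ?_⟩
  rcases (SimpleGraph.Walk.mem_support_append_iff _ _).mp hx with h | h
  · exact hW1 x h
  · exact hW2 x h

lemma relIn_mono {D D' : Finset V} (hDD : D ⊆ D') {v w : V} (h : RelIn G D v w) :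
    RelIn G D' v w := by
  obtain ⟨W, hW⟩ := h
  exact ⟨W, fun x hx => hDD (hW x hx)⟩

lemma relIn_of_adj {D : Finset V} {v w : V} (hv : v ∈ D) (hw : w ∈ D) (h : G.Adj v w) :
    RelIn G D v w :=
  ⟨SimpleGraph.Walk.cons h SimpleGraph.Walk.nil, by
    intro x hx
    simp [SimpleGraph.Walk.support_cons] at hx
    rcases hx with h | h <;> subst h <;> assumption⟩

/-- All support vertices of an in-`D` walk from `v` are reachable from `v` in `D`. -/
lemma relIn_of_mem_support {D : Finset V} {v w : V} (W : G.Walk v w)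
    (hW : ∀ x ∈ W.support, x ∈ D) {y : V} (hy : y ∈ W.support) : RelIn G D v y :=
  ⟨W.takeUntil y hy, fun x hx => hW x (SimpleGraph.Walk.support_takeUntil_subset _ hy hx)⟩

/-- The connected component of `v` within `D`. -/
noncomputable def comp (G : SimpleGraph V) (D : Finset V) (v : V) : Finset V :=
  @Finset.filter V (fun w => RelIn G D v w) (Classical.decPred _) D

lemma mem_comp {D : Finset V} {v w : V} : w ∈ comp G D v ↔ w ∈ D ∧ RelIn G D v w := by
  unfold comp
  exact @Finset.mem_filter V (fun w => RelIn G D v w) (Classical.decPred _) D w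

lemma comp_subset {D : Finset V} {v : V} : comp G D v ⊆ D :=
  fun w hw => (mem_comp.mp hw).1

lemma mem_comp_self {D : Finset V} {v : V} (hv : v ∈ D) : v ∈ comp G D v :=
  mem_comp.mpr ⟨hv, relIn_refl hv⟩

lemma conn_comp {D : Finset V} {v : V} : Conn G (comp G D v) := by
  intro w hw x hx
  obtain ⟨-, Ww, hWw⟩ := mem_comp.mp hw
  obtain ⟨-, Wx, hWx⟩ := mem_comp.mp hx
  refine ⟨Ww.reverse.append Wx, fun y hy => ?_⟩
  rcases (SimpleGraph.Walk.mem_support_append_iff _ _).mp hy with h | h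
  · rw [SimpleGraph.Walk.support_reverse, List.mem_reverse] at h
    exact mem_comp.mpr ⟨hWw y h, relIn_of_mem_support Ww hWw h⟩
  · exact mem_comp.mpr ⟨hWx y h, relIn_of_mem_support Wx hWx h⟩

lemma comp_eq_of_relIn {D : Finset V} {v w : V} (h : RelIn G D v w) :
    comp G D v = comp G D w := by
  ext x
  simp only [mem_comp, and_congr_right_iff]
  exact fun _ => ⟨fun hx => relIn_trans (relIn_symm h) hx, fun hx => relIn_trans h hx⟩

lemma isMax_iff {D C : Finset V} :
    IsMaxConnComp G D C ↔ ∃ v ∈ D, C = comp G D v := by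
  constructor
  · rintro ⟨hCD, ⟨v, hv⟩, hconn, hmax⟩
    refine ⟨v, hCD hv, ?_⟩
    have hsub : C ⊆ comp G D v := by
      intro w hw
      obtain ⟨W, hW⟩ := hconn v hv w hw
      exact mem_comp.mpr ⟨hCD hw, ⟨W, fun x hx => hCD (hW x hx)⟩⟩
    exact (hmax (comp G D v) hsub comp_subset conn_comp).symm
  · rintro ⟨v, hv, rfl⟩
    refine ⟨comp_subset, ⟨v, mem_comp_self hv⟩, conn_comp, fun C' h1 h2 h3 => ?_⟩
    refine Finset.Subset.antisymm (fun y hy => ?_) h1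
    obtain ⟨W, hW⟩ := h3 v (h1 (mem_comp_self hv)) y hy
    exact mem_comp.mpr ⟨h2 hy, ⟨W, fun x hx => h2 (hW x hx)⟩⟩

/-- The set of connected components of `D`. -/
noncomputable def comps (G : SimpleGraph V) (D : Finset V) : Finset (Finset V) :=
  D.image (fun v => comp G D v)

lemma mem_comps {D C : Finset V} : C ∈ comps G D ↔ IsMaxConnComp G D C := by
  rw [isMax_iff, comps, Finset.mem_image]
  constructor
  · rintro ⟨v, hv, rfl⟩; exact ⟨v, hv, rfl⟩
  · rintro ⟨v, hv, rfl⟩; exact ⟨v, hv, rfl⟩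

lemma comps_conn_singleton {D : Finset V} (hne : D.Nonempty) (hconn : Conn G D) :
    comps G D = {D} := by
  have h : ∀ u ∈ D, comp G D u = D := by
    intro u hu
    refine Finset.Subset.antisymm comp_subset (fun w hw => mem_comp.mpr ⟨hw, hconn u hu w hw⟩)
  rw [comps, Finset.image_congr (fun u hu => h u hu), Finset.image_const hne]

lemma comp_sdiff {D : Finset V} {v w : V} (hw : w ∈ D) (hwc : w ∉ comp G D v) :
    comp G D w = comp G (D \ comp G D v) w := by
  have hkey : ∀ y : V, RelIn G D w y → y ∉ comp G D v := by
    intro y hy hyc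
    exact hwc (mem_comp.mpr ⟨hw, relIn_trans (mem_comp.mp hyc).2 (relIn_symm hy)⟩)
  ext x
  constructor
  · intro hx
    obtain ⟨hxD, W, hW⟩ := mem_comp.mp hx
    have hsup : ∀ y ∈ W.support, y ∈ D \ comp G D v := by
      intro y hyW
      exact Finset.mem_sdiff.mpr ⟨hW y hyW, hkey y (relIn_of_mem_support W hW hyW)⟩
    exact mem_comp.mpr ⟨hsup x W.end_mem_support, W, hsup⟩
  · intro hx
    obtain ⟨hxD', h⟩ := mem_comp.mp hx
    exact mem_comp.mpr ⟨(Finset.mem_sdiff.mp hxD').1, relIn_mono Finset.sdiff_subset h⟩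

lemma comps_sdiff {D : Finset V} {v : V} (hv : v ∈ D) :
    comps G D = insert (comp G D v) (comps G (D \ comp G D v)) := by
  have hD : comp G D v ∪ (D \ comp G D v) = D := Finset.union_sdiff_of_subset comp_subset
  have h3 : comps G D = (comp G D v).image (fun u => comp G D u) ∪
      (D \ comp G D v).image (fun u => comp G D u) := by
    rw [comps, ← Finset.image_union, hD]
  have h1 : (comp G D v).image (fun u => comp G D u) = {comp G D v} := by
    have heq : ∀ u ∈ comp G D v, comp G D u = comp G D v :=
      fun u hu => (comp_eq_of_relIn (mem_comp.mp hu).2).symm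
    rw [Finset.image_congr (fun u hu => heq u hu), Finset.image_const ⟨v, mem_comp_self hv⟩]
  have h2 : (D \ comp G D v).image (fun u => comp G D u) = comps G (D \ comp G D v) := by
    rw [comps]
    apply Finset.image_congr
    intro u hu
    exact comp_sdiff (Finset.mem_sdiff.mp hu).1 (Finset.mem_sdiff.mp hu).2
  rw [h3, h1, h2, ← Finset.insert_eq]

lemma comp_not_mem_comps_sdiff {D : Finset V} {v : V} :
    comp G D v ∉ comps G (D \ comp G D v) := by
  intro hmem
  rw [comps, Finset.mem_image] at hmem
  obtain ⟨w, hw, hcomp⟩ := hmem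
  have hw' := Finset.mem_sdiff.mp hw
  have hself : w ∈ comp G (D \ comp G D v) w := mem_comp_self hw
  rw [hcomp] at hself
  exact hw'.2 hself


lemma sdiff_subset_compl_spo [DecidableRel G.Adj] {D : Finset V} {v : V} (hv : v ∈ D) :
    D \ comp G D v ⊆ Finset.univ \ spo G (comp G D v) := by
  intro w hw
  obtain ⟨hwD, hwc⟩ := Finset.mem_sdiff.mp hw
  refine Finset.mem_sdiff.mpr ⟨Finset.mem_univ w, fun hspo => ?_⟩
  rw [spo, Finset.mem_filter] at hspo
  rcases hspo.2 with h | ⟨u, hu, hadj⟩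
  · exact hwc h
  · obtain ⟨huD, hrel⟩ := mem_comp.mp hu
    exact hwc (mem_comp.mpr ⟨hwD, relIn_trans hrel (relIn_of_adj huD hwD hadj)⟩)

lemma walk_confine {A B : Finset V} (hAB : ∀ a ∈ A, ∀ b ∈ B, ¬ G.Adj a b) :
    ∀ {v w : V} (W : G.Walk v w), (∀ x ∈ W.support, x ∈ A ∪ B) → v ∈ A →
      ∀ x ∈ W.support, x ∈ A := by
  intro v w W
  induction W with
  | nil =>
    intro _ hv x hx
    rw [SimpleGraph.Walk.support_nil, List.mem_singleton] at hx
    exact hx ▸ hv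
  | @cons u u' w h W ih =>
    intro hsup hv x hx
    have hu' : u' ∈ A := by
      have hmem : u' ∈ A ∪ B := hsup u' (by simp [SimpleGraph.Walk.support_cons])
      rcases Finset.mem_union.mp hmem with h' | h'
      · exact h'
      · exact absurd h (hAB u hv u' h')
    rw [SimpleGraph.Walk.support_cons, List.mem_cons] at hx
    rcases hx with rfl | hx
    · exact hv
    · exact ih (fun y hy => hsup y (by simp [SimpleGraph.Walk.support_cons, hy])) hu' x hx

lemma comp_union_left {A B : Finset V} (hAB : ∀ a ∈ A, ∀ b ∈ B, ¬ G.Adj a b) {v : V}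
    (hv : v ∈ A) : comp G (A ∪ B) v = comp G A v := by
  ext x
  constructor
  · intro hx
    obtain ⟨-, W, hW⟩ := mem_comp.mp hx
    have hsup := walk_confine hAB W hW hv
    exact mem_comp.mpr ⟨hsup x W.end_mem_support, W, hsup⟩
  · intro hx
    obtain ⟨hxA, h⟩ := mem_comp.mp hx
    exact mem_comp.mpr ⟨Finset.mem_union_left _ hxA, relIn_mono Finset.subset_union_left h⟩

lemma comps_union {A B : Finset V} (hAB : ∀ a ∈ A, ∀ b ∈ B, ¬ G.Adj a b) :
    comps G (A ∪ B) = comps G A ∪ comps G B := by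
  have hBA : ∀ b ∈ B, ∀ a ∈ A, ¬ G.Adj b a := fun b hb a ha hadj => hAB a ha b hb hadj.symm
  rw [comps, Finset.image_union]
  congr 1
  · rw [comps]
    apply Finset.image_congr
    intro u hu
    exact comp_union_left hAB hu
  · rw [comps]
    apply Finset.image_congr
    intro u hu
    rw [Finset.union_comm]
    exact comp_union_left hBA hu

lemma comps_disjoint {A B : Finset V} (hd : Disjoint A B) :
    Disjoint (comps G A) (comps G B) := by
  rw [Finset.disjoint_left]
  intro C hCA hCB
  rw [comps, Finset.mem_image] at hCA hCB
  obtain ⟨u, hu, rfl⟩ := hCA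
  obtain ⟨w, hw, hcomp⟩ := hCB
  have h1 : w ∈ comp G A u := hcomp ▸ mem_comp_self hw
  exact Finset.disjoint_left.mp hd (comp_subset h1) hw

lemma comps_empty : comps G (∅ : Finset V) = ∅ := by simp [comps]


section Main

variable {G : SimpleGraph V} {p : (V → Bool) → ℝ}

lemma forwardCore [DecidableRel G.Adj] (hp : IsDist p) (hcs : CSMP G p) :
    ∀ (n : ℕ) (D : Finset V), D.card ≤ n → qM p D = ∏ C ∈ comps G D, qM p C := by
  intro n
  induction n with
  | zero =>
    intro D hD
    rw [Nat.le_zero, Finset.card_eq_zero] at hD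
    subst hD
    rw [comps_empty, Finset.prod_empty, q_empty hp]
  | succ n ih =>
    intro D hcard
    rcases D.eq_empty_or_nonempty with rfl | ⟨v, hv⟩
    · rw [comps_empty, Finset.prod_empty, q_empty hp]
    · have hC0sub : comp G D v ⊆ D := comp_subset
      have hcard' : (D \ comp G D v).card ≤ n := by
        have hss : D \ comp G D v ⊂ D :=
          Finset.sdiff_ssubset hC0sub ⟨v, mem_comp_self hv⟩
        have := Finset.card_lt_card hss
        omega
      have hIndep : Indep p (comp G D v) (Finset.univ \ spo G (comp G D v)) :=
        hcs _ ⟨v, mem_comp_self hv⟩ conn_comp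
      have hIndep' : Indep p (comp G D v) (D \ comp G D v) :=
        indep_subset_right hIndep (sdiff_subset_compl_spo hv)
      have hq : qM p D = qM p (comp G D v) * qM p (D \ comp G D v) := by
        have h0 := hIndep' (fun _ => false) (fun _ => false)
        rw [Pr2_zero, Finset.union_sdiff_of_subset hC0sub] at h0
        exact h0
      rw [hq, ih _ hcard', comps_sdiff hv, Finset.prod_insert comp_not_mem_comps_sdiff]

lemma q_comps_of_H [DecidableRel G.Adj] (hp : IsDist p)
    (H : ∀ D : Finset V, ¬ Conn G D →
      ∀ 𝒞 : Finset (Finset V), (∀ C : Finset V, C ∈ 𝒞 ↔ IsMaxConnComp G D C) →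
        qM p D = ∏ C ∈ 𝒞, qM p C) :
    ∀ D : Finset V, qM p D = ∏ C ∈ comps G D, qM p C := by
  intro D
  by_cases hD : Conn G D
  · rcases D.eq_empty_or_nonempty with rfl | hne
    · rw [comps_empty, Finset.prod_empty, q_empty hp]
    · rw [comps_conn_singleton hne hD, Finset.prod_singleton]
  · exact H D hD (comps G D) (fun C => mem_comps)

end Main

/-- Theorem (Möbius constraints): `p ∈ B(G)` iff for every disconnected set `D`,
with inclusion-maximal connected subsets `C_1, …, C_r`, the Möbius parameters
satisfy `q_D = q_{C_1} ⋯ q_{C_r}`. -/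
theorem stmt2 (G : SimpleGraph V) [DecidableRel G.Adj] (p : (V → Bool) → ℝ)
    (hp : IsDist p) :
    CSMP G p ↔
      ∀ D : Finset V, ¬ Conn G D →
        ∀ 𝒞 : Finset (Finset V), (∀ C : Finset V, C ∈ 𝒞 ↔ IsMaxConnComp G D C) →
          qM p D = ∏ C ∈ 𝒞, qM p C := by
  constructor
  · intro hcs D hD 𝒞 h𝒞
    have h𝒞' : 𝒞 = comps G D := Finset.ext fun C => (h𝒞 C).trans mem_comps.symm
    rw [h𝒞']
    exact forwardCore hp hcs D.card D le_rfl
  · intro H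
    have H' := q_comps_of_H hp H
    intro C hCne hCconn
    apply indep_of_q
    intro A hA B hB
    have hsubC : C ⊆ spo G C := fun w hw =>
      Finset.mem_filter.mpr ⟨Finset.mem_univ w, Or.inl hw⟩
    have hAB : ∀ a ∈ A, ∀ b ∈ B, ¬ G.Adj a b := by
      intro a ha b hb hadj
      have hb' := Finset.mem_sdiff.mp (hB hb)
      exact hb'.2 (Finset.mem_filter.mpr ⟨Finset.mem_univ b, Or.inr ⟨a, hA ha, hadj⟩⟩)
    have hdisj : Disjoint A B := by
      rw [Finset.disjoint_left]
      intro x hxA hxB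
      exact (Finset.mem_sdiff.mp (hB hxB)).2 (hsubC (hA hxA))
    rw [H' (A ∪ B), H' A, H' B, comps_union hAB, Finset.prod_union (comps_disjoint hdisj)]


end BMMI
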